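/- arXiv:1206.5860 — 2 statements merged into one kernel-verified Lean document; each statement's English description precedes it below -/
import Mathlib

section
/- Let D > 0, Δt > 0, and K(ξ, Δt) = (4πDΔt)^{−1/2} exp(−ξ²/(4DΔt)). Let Ω_P = (−∞,0) and Ω_B = (0,∞). Let p : Ω_P → [0,∞) be integrable, let x₁, …, x_m ∈ Ω_B be fixed, and define the measure μ = p(x)·1_{Ω_P}(x) dx + Σ_{i=1}^m δ_{x_i}. Define p̃(x) = ∫_{Ω_P} K(x − x', Δt) p(x') dx' for x ∈ ℝ and α = ∫_0^∞ p̃(x) dx, and assume 0 < α < 1. Perform one step of the PBD algorithm: let ξ be Bernoulli(α); on the event ξ = 1 create one new particle at a random position Y in Ω_B with probability density p₂(x) = p̃(x)/α on (0,∞); independently move each existing particle to Z_i = x_i + √(2DΔt) η_i with η_i independent standard normals (independent of ξ and Y). The set of particles in Ω_B after the step is {Y if ξ = 1} ∪ {Z_i : Z_i ∈ Ω_B}. Then for every Borel set A ⊆ Ω_B, the expected number of particles in A after the step equals ∫_A ∫_ℝ K(x − x', Δt) dμ(x') dx = ∫_A [ p̃(x) + Σ_{i=1}^m K(x − x_i,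 Δt) ] dx. -/
open MeasureTheory ProbabilityTheory Set
open scoped Classical NNReal ENNReal

/-- The Gaussian heat kernel `K(ξ, τ) = (4πDτ)^{-1/2} exp(-ξ²/(4Dτ))`. -/
noncomputable def heatKernel (D ξ τ : ℝ) : ℝ :=
  (Real.sqrt (4 * Real.pi * D * τ))⁻¹ * Real.exp (-ξ ^ 2 / (4 * D * τ))

/-- One step of the first PBD algorithm (A1)–(A5) satisfies Condition (C.1):
with `Ω_P = (−∞,0)`, `Ω_B = (0,∞)`, continuum density `p` on `Ω_P`, particles at
`x₁,…,x_m ∈ Ω_B`, diffused density `p̃ = K(·,Δt) ⋆ (p 1_{Ω_P})`, and `α = ∫_{Ω_B} p̃`,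
after one step (create a particle at `Y ∼ p̃/α` on `Ω_B` with probability `α`, and move each
particle to `Z i = x i + √(2DΔt) η i`), the expected number of particles in any Borel
`A ⊆ Ω_B` equals `∫_A (p̃(x) + Σ_i K(x − x_i, Δt)) dx`, i.e. the heat-kernel evolution of the
combined initial state. -/
theorem pbd_first_algorithm_mean_in_BD_domain
    {Ω : Type*} [MeasurableSpace Ω] (P : Measure Ω) [IsProbabilityMeasure P]
    (D Δt : ℝ) (hD : 0 < D) (hΔt : 0 < Δt)
    -- the continuum density on `Ω_P = (−∞, 0)`
    (p : ℝ → ℝ) (hp0 : ∀ x ∈ Iio (0 : ℝ), 0 ≤ p x) (hpint : IntegrableOn p (Iio 0))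
    -- the particle positions in `Ω_B = (0, ∞)`
    (m : ℕ) (xs : Fin m → ℝ) (hxs : ∀ i, xs i ∈ Ioi (0 : ℝ))
    -- the diffused continuum density `p̃` and the crossing mass `α`
    (ptilde : ℝ → ℝ)
    (hptilde : ∀ x, ptilde x = ∫ y in Iio (0 : ℝ), heatKernel D (x - y) Δt * p y)
    (α : ℝ) (hα : α = ∫ x in Ioi (0 : ℝ), ptilde x) (hα0 : 0 < α) (hα1 : α < 1)
    -- the Bernoulli(α) creation event `ξ` and creation position `Y` with density `p̃/α`
    -- on `Ω_B`, encoded jointly: `P(ξ = 1 ∧ Y ∈ B) = ∫_{B ∩ Ω_B} p̃`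
    (ξ : Ω → Bool) (Y : Ω → ℝ) (hξmeas : Measurable ξ) (hYmeas : Measurable Y)
    (hjoint : ∀ B : Set ℝ, MeasurableSet B →
      P {ω | ξ ω = true ∧ Y ω ∈ B} = ENNReal.ofReal (∫ x in B ∩ Ioi (0 : ℝ), ptilde x))
    -- the independent standard-normal displacements of the existing particles
    (η : Fin m → Ω → ℝ)
    (hηmeas : ∀ i, Measurable (η i))
    (hηlaw : ∀ i, Measure.map (η i) P = gaussianReal 0 1)
    (hηindep : iIndepFun η P)
    -- the displacements are independent of the creation step
    (hindep : IndepFun (fun ω => (ξ ω, Y ω)) (fun ω i => η i ω) P) :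
    -- conclusion: expected number of particles in `A ⊆ Ω_B` after the step
    ∀ A : Set ℝ, A ⊆ Ioi (0 : ℝ) → MeasurableSet A →
      ∫ ω, ((if ξ ω = true ∧ Y ω ∈ A then (1 : ℝ) else 0) +
            ∑ i, if xs i + Real.sqrt (2 * D * Δt) * η i ω ∈ A then (1 : ℝ) else 0) ∂P
        = ∫ x in A, (ptilde x + ∑ i, heatKernel D (x - xs i) Δt) := by
  intro A hA hAm
  have h2D : (0:ℝ) < 2 * D * Δt := by positivity
  set c : ℝ := Real.sqrt (2 * D * Δt) with hc
  have hcsq : c ^ 2 = 2 * D * Δt := Real.sq_sqrt h2D.le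
  set v : ℝ≥0 := ⟨2 * D * Δt, h2D.le⟩ with hv
  have hv0 : v ≠ 0 := by
    intro h
    have : (v : ℝ) = 0 := by rw [h]; rfl
    rw [hv] at this
    exact absurd this (ne_of_gt h2D)
  -- heat kernel = gaussian pdf
  have hKg : ∀ y x : ℝ, heatKernel D (x - y) Δt = gaussianPDFReal y v x := by
    intro y x
    simp only [heatKernel, gaussianPDFReal, hv, NNReal.coe_mk]
    change _ = (√(2 * Real.pi * (2 * D * Δt)))⁻¹ * Real.exp (-(x - y) ^ 2 / (2 * (2 * D * Δt)))
    ring_nf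
  have hK0 : ∀ y x : ℝ, 0 ≤ heatKernel D (x - y) Δt := fun y x => by
    rw [hKg]; exact gaussianPDFReal_nonneg _ _ _
  -- nonnegativity of ptilde
  have hpt0 : ∀ x, 0 ≤ ptilde x := by
    intro x
    rw [hptilde]
    refine setIntegral_nonneg measurableSet_Iio fun y hy => mul_nonneg (hK0 y x) (hp0 y hy)
  -- measurability of ptilde
  have hKcont : Continuous fun z : ℝ × ℝ => heatKernel D (z.1 - z.2) Δt := by
    unfold heatKernel
    fun_prop
  have hptm : AEStronglyMeasurable ptilde volume := by
    have hfaem : AEStronglyMeasurable (fun z : ℝ × ℝ => heatKernel D (z.1 - z.2) Δt * p z.2)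
        (volume.prod (volume.restrict (Iio 0))) :=
      (hKcont.aemeasurable.mul hpint.aestronglyMeasurable.aemeasurable.comp_snd).aestronglyMeasurable
    have := hfaem.integral_prod_right'
    exact this.congr (Filter.Eventually.of_forall fun x => (hptilde x).symm)
  -- integrability of ptilde on (0, ∞)
  have hptInt : IntegrableOn ptilde (Ioi 0) := by
    refine ⟨hptm.restrict, ?_⟩
    rw [hasFiniteIntegral_iff_ofReal (Filter.Eventually.of_forall hpt0)]
    have hbound : ∀ x, ENNReal.ofReal (ptilde x)
        ≤ ∫⁻ y in Iio (0:ℝ), ENNReal.ofReal (heatKernel D (x - y) Δt * p y) := by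
      intro x
      rw [hptilde]
      by_cases hint : IntegrableOn (fun y => heatKernel D (x - y) Δt * p y) (Iio 0)
      · rw [ofReal_integral_eq_lintegral_ofReal hint
          ((ae_restrict_iff' measurableSet_Iio).2 (Filter.Eventually.of_forall
            fun y hy => mul_nonneg (hK0 y x) (hp0 y hy)))]
      · rw [integral_undef hint]; simp
    have hunc : AEMeasurable
        (fun z : ℝ × ℝ => ENNReal.ofReal (heatKernel D (z.1 - z.2) Δt * p z.2))
        ((volume.restrict (Ioi 0)).prod (volume.restrict (Iio 0))) :=
      ENNReal.measurable_ofReal.comp_aemeasurable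
        (hKcont.aemeasurable.mul hpint.aestronglyMeasurable.aemeasurable.comp_snd)
    calc ∫⁻ x in Ioi (0:ℝ), ENNReal.ofReal (ptilde x)
        ≤ ∫⁻ x in Ioi (0:ℝ), ∫⁻ y in Iio (0:ℝ),
            ENNReal.ofReal (heatKernel D (x - y) Δt * p y) :=
          lintegral_mono fun x => hbound x
      _ = ∫⁻ y in Iio (0:ℝ), ∫⁻ x in Ioi (0:ℝ),
            ENNReal.ofReal (heatKernel D (x - y) Δt * p y) :=
          lintegral_lintegral_swap hunc
      _ ≤ ∫⁻ y in Iio (0:ℝ), ENNReal.ofReal (p y) := by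
          refine lintegral_mono fun y => ?_
          calc ∫⁻ x in Ioi (0:ℝ), ENNReal.ofReal (heatKernel D (x - y) Δt * p y)
              = ∫⁻ x in Ioi (0:ℝ),
                  ENNReal.ofReal (heatKernel D (x - y) Δt) * ENNReal.ofReal (p y) := by
                refine lintegral_congr fun x => ?_
                rw [ENNReal.ofReal_mul (hK0 y x)]
            _ = (∫⁻ x in Ioi (0:ℝ), ENNReal.ofReal (heatKernel D (x - y) Δt))
                  * ENNReal.ofReal (p y) := by
                rw [lintegral_mul_const' _ _ ENNReal.ofReal_ne_top]
            _ ≤ 1 * ENNReal.ofReal (p y) := by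
                refine mul_le_mul_left ?_ _
                calc ∫⁻ x in Ioi (0:ℝ), ENNReal.ofReal (heatKernel D (x - y) Δt)
                    ≤ ∫⁻ x, ENNReal.ofReal (heatKernel D (x - y) Δt) :=
                      setLIntegral_le_lintegral _ _
                  _ = ∫⁻ x, ENNReal.ofReal (gaussianPDFReal y v x) := by
                      refine lintegral_congr fun x => by rw [hKg]
                  _ = 1 := lintegral_gaussianPDFReal_eq_one y hv0
            _ = ENNReal.ofReal (p y) := one_mul _
      _ < ⊤ := by
          refine lt_of_le_of_lt (lintegral_mono fun y => Real.ofReal_le_enorm (p y)) ?_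
          exact hpint.2
  -- generic indicator-integral lemma
  have hind : ∀ (q : Ω → Prop) [DecidablePred q], MeasurableSet {ω | q ω} →
      (∫ ω, (if q ω then (1:ℝ) else 0) ∂P = (P {ω | q ω}).toReal) ∧
        Integrable (fun ω => if q ω then (1:ℝ) else 0) P := by
    intro q _ hq
    have heq : ∀ ω, (if q ω then (1:ℝ) else 0) = {ω' | q ω'}.indicator 1 ω := by
      intro ω
      by_cases h : q ω <;> simp [Set.indicator_apply, Set.mem_setOf_eq, h]
    constructor
    · rw [← measureReal_def, ← integral_indicator_one hq]
      exact integral_congr_ae (Filter.Eventually.of_forall heq)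
    · exact ((integrable_const (1:ℝ)).indicator hq).congr
        (Filter.Eventually.of_forall fun ω => (heq ω).symm)
  -- the sets
  set S0 : Set Ω := {ω | ξ ω = true ∧ Y ω ∈ A} with hS0
  have hS0m : MeasurableSet S0 :=
    ((hξmeas (MeasurableSet.singleton true)).inter (hYmeas hAm))
  set Z : Fin m → Ω → ℝ := fun i ω => xs i + c * η i ω with hZdef
  have hZmeas : ∀ i, Measurable (Z i) := fun i =>
    measurable_const.add (measurable_const.mul (hηmeas i))
  have hSim : ∀ i, MeasurableSet (Z i ⁻¹' A) := fun i => hZmeas i hAm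
  -- law of Z i
  have hZlaw : ∀ i, Measure.map (Z i) P = gaussianReal (xs i) v := by
    intro i
    calc Measure.map (Z i) P
        = Measure.map ((fun t => xs i + t) ∘ (fun t => c * t))
            (Measure.map (η i) P) := by
          rw [Measure.map_map (by fun_prop) (hηmeas i)]
          rfl
      _ = Measure.map (fun t => xs i + t)
            (Measure.map (fun t => c * t) (gaussianReal 0 1)) := by
          rw [hηlaw i, ← Measure.map_map (by fun_prop) (by fun_prop)]
      _ = gaussianReal (xs i) v := by
          rw [show (fun t => c * t) = (c * ·) from rfl,
            gaussianReal_map_const_mul,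
            show (fun t => xs i + t) = (xs i + ·) from rfl,
            gaussianReal_map_const_add, mul_zero, zero_add]
          congr 1
          ext
          simp [hcsq, hv]
          rfl
  -- value of each displacement term
  have hZterm : ∀ i, ∫ ω, (if Z i ω ∈ A then (1:ℝ) else 0) ∂P
      = ∫ x in A, heatKernel D (x - xs i) Δt := by
    intro i
    have h1 : ∫ ω, (if Z i ω ∈ A then (1:ℝ) else 0) ∂P = (P (Z i ⁻¹' A)).toReal :=
      (hind _ (hSim i)).1
    rw [h1]
    have : P (Z i ⁻¹' A) = gaussianReal (xs i) v A := by
      rw [← hZlaw i, Measure.map_apply (hZmeas i) hAm]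
    rw [this, gaussianReal_apply_eq_integral _ hv0,
      ENNReal.toReal_ofReal
        (setIntegral_nonneg hAm fun x _ => gaussianPDFReal_nonneg _ _ _)]
    exact setIntegral_congr_fun hAm fun x _ => (hKg (xs i) x).symm
  -- value of the creation term
  have hcreate : ∫ ω, (if ξ ω = true ∧ Y ω ∈ A then (1:ℝ) else 0) ∂P = ∫ x in A, ptilde x := by
    have h1 : ∫ ω, (if ξ ω = true ∧ Y ω ∈ A then (1:ℝ) else 0) ∂P = (P S0).toReal :=
      (hind _ hS0m).1
    rw [h1, hS0, hjoint A hAm, inter_eq_left.2 hA,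
      ENNReal.toReal_ofReal (setIntegral_nonneg hAm fun x _ => hpt0 x)]
  -- split the left-hand side
  have hLHS : ∫ ω, ((if ξ ω = true ∧ Y ω ∈ A then (1 : ℝ) else 0) +
        ∑ i, if Z i ω ∈ A then (1 : ℝ) else 0) ∂P
      = (∫ ω, (if ξ ω = true ∧ Y ω ∈ A then (1:ℝ) else 0) ∂P)
        + ∑ i, ∫ ω, (if Z i ω ∈ A then (1:ℝ) else 0) ∂P := by
    have hInt0 : Integrable (fun ω => if ξ ω = true ∧ Y ω ∈ A then (1:ℝ) else 0) P :=
      (hind _ hS0m).2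
    have hInti : ∀ i, Integrable (fun ω => if Z i ω ∈ A then (1:ℝ) else 0) P :=
      fun i => (hind _ (hSim i)).2
    rw [integral_add hInt0 (integrable_finset_sum _ fun i _ => hInti i),
      integral_finset_sum _ fun i _ => hInti i]
  -- integrability on the RHS
  have hKint : ∀ i, IntegrableOn (fun x => heatKernel D (x - xs i) Δt) A := by
    intro i
    have heq : (fun x => heatKernel D (x - xs i) Δt) = gaussianPDFReal (xs i) v :=
      funext fun x => hKg (xs i) x
    rw [heq]
    exact (integrable_gaussianPDFReal (xs i) v).integrableOn
  have hRHS : ∫ x in A, (ptilde x + ∑ i, heatKernel D (x - xs i) Δt)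
      = (∫ x in A, ptilde x) + ∑ i, ∫ x in A, heatKernel D (x - xs i) Δt := by
    rw [integral_add (hptInt.mono_set hA)
      (integrable_finset_sum _ fun i _ => hKint i),
      integral_finset_sum _ fun i _ => hKint i]
  rw [hLHS, hRHS, hcreate]
  congr 1
  exact Finset.sum_congr rfl fun i _ => hZterm i
end

section
/- Let D > 0, Δt > 0, and K(ξ, Δt) = (4πDΔt)^{−1/2} exp(−ξ²/(4DΔt)). Let Ω_P = (−∞,0), Ω_B = (0,∞), and let N ∈ ℕ. Let p : Ω_P → [0,∞) be integrable with ∫_{Ω_P} p = N − m, let x₁, …, x_m ∈ Ω_B be fixed, and define μ = p·1_{Ω_P} dx + Σ_{i=1}^m δ_{x_i}, p̃(x) = ∫_{Ω_P} K(x − x', Δt) p(x') dx', and α = ∫_0^∞ p̃(x) dx, assuming 0 < α < 1 and α < N − m. Perform one step of the PBD algorithm: let ξ be Bernoulli(α), set β = (N − m − 1)/(N − m − α) if ξ = 1 and β = (N − m)/(N − m − α) if ξ = 0; independently move each particle to Z_i = x_i + √(2DΔt) η_i with η_i independent standard normals; define the updated continuum measure on Ω_P by q = β p̃ · 1_{Ω_P}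 dx + Σ_{i : Z_i ∈ Ω_P} δ_{Z_i}. Then for every Borel set A ⊆ Ω_P, E[q(A)] = ∫_A ∫_ℝ K(x − x', Δt) dμ(x') dx = ∫_A [ p̃(x) + Σ_{i=1}^m K(x − x_i, Δt) ] dx. -/
open MeasureTheory ProbabilityTheory Set
open scoped Classical

/-- The heat kernel is the Gaussian pdf with mean `μ` and variance `2DΔt`. -/
lemma heatKernel_eq_gaussianPDFReal {D Δt : ℝ} {v : NNReal} (hv : (v : ℝ) = 2 * D * Δt)
    (μ x : ℝ) : heatKernel D (x - μ) Δt = gaussianPDFReal μ v x := by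
  unfold heatKernel gaussianPDFReal
  rw [hv, show (2 : ℝ) * Real.pi * (2 * D * Δt) = 4 * Real.pi * D * Δt by ring,
    show (2 : ℝ) * (2 * D * Δt) = 4 * D * Δt by ring]

/-- One step of the first PBD algorithm (A1)–(A5) satisfies Condition (C.3):
with `Ω_P = (−∞,0)`, `Ω_B = (0,∞)`, continuum density `p` on `Ω_P` of mass `N − m`,
particles at `x₁,…,x_m ∈ Ω_B`, diffused density `p̃` and crossing mass `α`, rescaling factor
`β = (N−m−1)/(N−m−α)` if a particle is created (probability `α`) and `β = (N−m)/(N−m−α)`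
otherwise, and particle moves `Z i = x i + √(2DΔt) η i`, the updated continuum measure
`q = β p̃ 1_{Ω_P} dx + Σ_{i : Z_i ∈ Ω_P} δ_{Z_i}` satisfies, for every Borel `A ⊆ Ω_P`,
`E[q(A)] = ∫_A (p̃(x) + Σ_i K(x − x_i, Δt)) dx`. -/
theorem pbd_first_algorithm_mean_in_PDE_domain
    {Ω : Type*} [MeasurableSpace Ω] (P : Measure Ω) [IsProbabilityMeasure P]
    (D Δt : ℝ) (hD : 0 < D) (hΔt : 0 < Δt) (N : ℕ)
    -- the continuum density on `Ω_P = (−∞, 0)` with total mass `N − m`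
    (p : ℝ → ℝ) (hp0 : ∀ x ∈ Iio (0 : ℝ), 0 ≤ p x) (hpint : IntegrableOn p (Iio 0))
    (m : ℕ) (hmass : ∫ x in Iio (0 : ℝ), p x = (N : ℝ) - (m : ℝ))
    -- the particle positions in `Ω_B = (0, ∞)`
    (xs : Fin m → ℝ) (hxs : ∀ i, xs i ∈ Ioi (0 : ℝ))
    -- the diffused continuum density `p̃` and the crossing mass `α`
    (ptilde : ℝ → ℝ)
    (hptilde : ∀ x, ptilde x = ∫ y in Iio (0 : ℝ), heatKernel D (x - y) Δt * p y)
    (α : ℝ) (hα : α = ∫ x in Ioi (0 : ℝ), ptilde x)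
    (hα0 : 0 < α) (hα1 : α < 1) (hαN : α < (N : ℝ) - (m : ℝ))
    -- the Bernoulli(α) creation event `ξ`
    (ξ : Ω → Bool) (hξmeas : Measurable ξ)
    (hξlaw : P {ω | ξ ω = true} = ENNReal.ofReal α)
    -- the independent standard-normal displacements of the existing particles
    (η : Fin m → Ω → ℝ)
    (hηmeas : ∀ i, Measurable (η i))
    (hηlaw : ∀ i, Measure.map (η i) P = gaussianReal 0 1)
    (hηindep : iIndepFun η P)
    -- the displacements are independent of the creation step
    (hindep : IndepFun ξ (fun ω i => η i ω) P) :
    -- conclusion: for every Borel `A ⊆ Ω_P`, the expected value of the updated continuum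
    -- measure `q(A) = β ∫_A p̃ + #{i : Z_i ∈ A}` equals the heat-kernel evolution of the
    -- combined initial state
    ∀ A : Set ℝ, A ⊆ Iio (0 : ℝ) → MeasurableSet A →
      ∫ ω, ((if ξ ω = true then ((N : ℝ) - (m : ℝ) - 1) / ((N : ℝ) - (m : ℝ) - α)
             else ((N : ℝ) - (m : ℝ)) / ((N : ℝ) - (m : ℝ) - α)) * (∫ x in A, ptilde x) +
            ∑ i, if xs i + Real.sqrt (2 * D * Δt) * η i ω ∈ A then (1 : ℝ) else 0) ∂P
        = ∫ x in A, (ptilde x + ∑ i, heatKernel D (x - xs i) Δt) := by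
  intro A hA hAmeas
  have hv0 : (0 : ℝ) < 2 * D * Δt := by positivity
  set v : NNReal := ⟨2 * D * Δt, hv0.le⟩ with hv_def
  have hv : (v : ℝ) = 2 * D * Δt := rfl
  have hvne : v ≠ 0 := by
    refine fun h => hv0.ne' ?_
    rw [← hv, h, NNReal.coe_zero]
  set s : ℝ := Real.sqrt (2 * D * Δt) with hs_def
  have hs2 : s ^ 2 = 2 * D * Δt := Real.sq_sqrt hv0.le
  set a : ℝ := ((N : ℝ) - (m : ℝ) - 1) / ((N : ℝ) - (m : ℝ) - α) with ha_def
  set b : ℝ := ((N : ℝ) - (m : ℝ)) / ((N : ℝ) - (m : ℝ) - α) with hb_def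
  set c : ℝ := ∫ x in A, ptilde x with hc_def
  -- law of the moved particles
  have hZmeas : ∀ i : Fin m, Measurable (fun ω => xs i + s * η i ω) := fun i =>
    measurable_const.add ((hηmeas i).const_mul s)
  have hZlaw : ∀ i : Fin m,
      Measure.map (fun ω => xs i + s * η i ω) P = gaussianReal (xs i) v := by
    intro i
    have h1 : Measurable fun y : ℝ => xs i + y := measurable_const.add measurable_id
    have h2 : Measurable fun y : ℝ => s * y := measurable_id.const_mul s
    calc Measure.map (fun ω => xs i + s * η i ω) P
        = Measure.map ((fun y => xs i + y) ∘ ((fun y => s * y) ∘ η i)) P := rfl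
      _ = Measure.map (fun y => xs i + y)
            (Measure.map ((fun y => s * y) ∘ η i) P) :=
          (Measure.map_map h1 (h2.comp (hηmeas i))).symm
      _ = Measure.map (fun y => xs i + y)
            (Measure.map (fun y => s * y) (Measure.map (η i) P)) := by
          rw [Measure.map_map h2 (hηmeas i)]
      _ = Measure.map (fun y => xs i + y)
            (Measure.map (fun y => s * y) (gaussianReal 0 1)) := by rw [hηlaw i]
      _ = Measure.map (fun y => xs i + y)
            (gaussianReal (s * 0) (NNReal.mk (s ^ 2) (sq_nonneg s) * 1)) := by
          rw [gaussianReal_map_const_mul]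
      _ = gaussianReal (s * 0 + xs i) (NNReal.mk (s ^ 2) (sq_nonneg s) * 1) :=
          gaussianReal_map_const_add (xs i)
      _ = gaussianReal (xs i) v := by
          congr 1
          · ring
          · rw [mul_one]
            exact NNReal.coe_injective (by rw [hv]; exact hs2)
  -- expectation of each indicator
  have hind : ∀ i : Fin m,
      ∫ ω, (if xs i + s * η i ω ∈ A then (1 : ℝ) else 0) ∂P
        = ∫ x in A, heatKernel D (x - xs i) Δt := by
    intro i
    have h1 : ∀ ω, (if xs i + s * η i ω ∈ A then (1 : ℝ) else 0)
        = A.indicator (1 : ℝ → ℝ) (xs i + s * η i ω) := by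
      intro ω; simp [Set.indicator_apply]
    simp_rw [h1]
    calc ∫ ω, A.indicator (1 : ℝ → ℝ) (xs i + s * η i ω) ∂P
        = ∫ x, A.indicator (1 : ℝ → ℝ) x
            ∂(Measure.map (fun ω => xs i + s * η i ω) P) :=
          (integral_map (hZmeas i).aemeasurable
            ((measurable_one.indicator hAmeas)).aestronglyMeasurable).symm
      _ = ∫ x in A, heatKernel D (x - xs i) Δt := by
          rw [hZlaw i, integral_indicator_one hAmeas, measureReal_def,
            gaussianReal_apply_eq_integral _ hvne A,
            ENNReal.toReal_ofReal
              (integral_nonneg fun x => gaussianPDFReal_nonneg _ _ _)]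
          exact setIntegral_congr_fun hAmeas fun x _ =>
            (heatKernel_eq_gaussianPDFReal hv (xs i) x).symm
  -- expectation of the rescaling factor
  have hS : MeasurableSet {ω | ξ ω = true} := hξmeas (MeasurableSet.singleton true)
  have hdne : (N : ℝ) - (m : ℝ) - α ≠ 0 := by linarith
  have hbeta_eq : (fun ω => if ξ ω = true then a else b)
      = fun ω => ({ω | ξ ω = true}).indicator (fun _ => a - b) ω + b := by
    funext ω
    by_cases h : ξ ω = true <;> simp [Set.indicator_apply, h]
  have hbeta_int : Integrable (fun ω => if ξ ω = true then a else b) P := by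
    rw [hbeta_eq]
    exact ((integrable_const (a - b)).indicator hS).add (integrable_const b)
  have hbeta : ∫ ω, (if ξ ω = true then a else b) ∂P = 1 := by
    rw [hbeta_eq, integral_add ((integrable_const (a - b)).indicator hS) (integrable_const b),
      integral_indicator hS, setIntegral_const, integral_const, measureReal_def, hξlaw,
      ENNReal.toReal_ofReal hα0.le, measureReal_def, measure_univ, ENNReal.toReal_one]
    rw [ha_def, hb_def]
    simp only [smul_eq_mul]
    field_simp
    ring
  -- integrability of the indicator sums
  have hind_int : ∀ i : Fin m,
      Integrable (fun ω => if xs i + s * η i ω ∈ A then (1 : ℝ) else 0) P := by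
    intro i
    have h1 : (fun ω => if xs i + s * η i ω ∈ A then (1 : ℝ) else 0)
        = ((fun ω => xs i + s * η i ω) ⁻¹' A).indicator (fun _ => (1 : ℝ)) := by
      funext ω; simp [Set.indicator_apply, Set.mem_preimage]
    rw [h1]
    exact (integrable_const (1 : ℝ)).indicator ((hZmeas i) hAmeas)
  -- integrability of ptilde on A
  have hKint : ∀ y : ℝ, Integrable (fun x => heatKernel D (x - y) Δt) := by
    intro y
    have := integrable_gaussianPDFReal y v
    refine this.congr (ae_of_all _ fun x => ?_)
    exact (heatKernel_eq_gaussianPDFReal hv y x).symm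
  have hpt_int : IntegrableOn ptilde A := by
    have hKcont : Continuous fun z : ℝ × ℝ => heatKernel D (z.1 - z.2) Δt := by
      unfold heatKernel
      exact continuous_const.mul
        ((((continuous_fst.sub continuous_snd).pow 2).neg.div_const _).rexp)
    set ν := volume.restrict (Iio (0 : ℝ)) with hν_def
    set F : ℝ × ℝ → ℝ := fun z => heatKernel D (z.1 - z.2) Δt * p z.2 with hF_def
    have hFmeas : AEStronglyMeasurable F (ν.prod ν) :=
      hKcont.aestronglyMeasurable.mul hpint.aestronglyMeasurable.comp_snd
    have hFint : Integrable F (ν.prod ν) := by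
      rw [integrable_prod_iff' hFmeas]
      constructor
      · refine ae_of_all _ fun y => ?_
        have : Integrable (fun x => heatKernel D (x - y) Δt * p y) ν :=
          ((hKint y).restrict).mul_const (p y)
        exact this
      · have hmeas2 : AEStronglyMeasurable (fun y => ∫ x, ‖F (x, y)‖ ∂ν) ν := by
          have := (hFmeas.prod_swap).norm
          exact this.integral_prod_right'
        refine Integrable.mono hpint.norm hmeas2 (ae_of_all _ fun y => ?_)
        have hnn : 0 ≤ ∫ x, ‖F (x, y)‖ ∂ν := integral_nonneg fun x => norm_nonneg _
        rw [Real.norm_of_nonneg hnn]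
        have h1 : ∀ x, ‖F (x, y)‖ = heatKernel D (x - y) Δt * ‖p y‖ := by
          intro x
          have hKnn : 0 ≤ heatKernel D (x - y) Δt := by
            rw [heatKernel_eq_gaussianPDFReal hv]
            exact gaussianPDFReal_nonneg _ _ _
          simp only [hF_def, norm_mul]
          rw [Real.norm_of_nonneg hKnn]
        simp_rw [h1]
        rw [integral_mul_const]
        have h2 : ∫ x, heatKernel D (x - y) Δt ∂ν ≤ 1 := by
          have h3 : ∫ x, heatKernel D (x - y) Δt ∂ν ≤ ∫ x, heatKernel D (x - y) Δt :=
            setIntegral_le_integral (hKint y) (ae_of_all _ fun x => by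
              show (0 : ℝ) ≤ heatKernel D (x - y) Δt
              rw [heatKernel_eq_gaussianPDFReal hv]
              exact gaussianPDFReal_nonneg _ _ _)
          have h4 : ∫ x, heatKernel D (x - y) Δt = 1 := by
            rw [integral_congr_ae (ae_of_all _ fun x => heatKernel_eq_gaussianPDFReal hv y x)]
            exact integral_gaussianPDFReal_eq_one y hvne
          linarith
        have h5 : (0 : ℝ) ≤ ‖p y‖ := norm_nonneg _
        calc (∫ x, heatKernel D (x - y) Δt ∂ν) * ‖p y‖ ≤ 1 * ‖p y‖ := by
              exact mul_le_mul_of_nonneg_right h2 h5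
          _ = ‖p y‖ := one_mul _
          _ ≤ ‖‖p y‖‖ := (norm_norm _).symm.le
    have := hFint.integral_prod_left
    have heq : ptilde = fun x => ∫ y, F (x, y) ∂ν := by
      funext x
      rw [hptilde x]
    rw [heq]
    exact MeasureTheory.IntegrableOn.mono_set this hA
  -- now put everything together
  have hK_A_int : ∀ i : Fin m, IntegrableOn (fun x => heatKernel D (x - xs i) Δt) A :=
    fun i => (hKint (xs i)).integrableOn
  have hlhs1 : Integrable (fun ω => (if ξ ω = true then a else b) * c) P :=
    hbeta_int.mul_const c
  have hlhs2 : Integrable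
      (fun ω => ∑ i, if xs i + s * η i ω ∈ A then (1 : ℝ) else 0) P :=
    integrable_finset_sum _ fun i _ => hind_int i
  rw [integral_add hlhs1 hlhs2, integral_mul_const, hbeta, one_mul,
    integral_finset_sum _ fun i _ => hind_int i]
  rw [integral_add hpt_int (integrable_finset_sum _ fun i _ => hK_A_int i),
    integral_finset_sum _ fun i _ => hK_A_int i]
  rw [← hc_def]
  congr 1
  exact Finset.sum_congr rfl fun i _ => hind i
end
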